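/- Let p_z ∈ (0,1), ω ≥ 0, C_u ≥ 0, define J(Ω) = ((1−p_z)/(Ω(1−p_z)+p_z)) · ( (Ω² − Ω)/2 + (Ω + ω·C_u)/(1−p_z) + p_z/(1−p_z)² ), and set Ω* = (√(p_z + 2ω·C_u·(1−p_z)) − p_z)/(1−p_z). Then J(Ω*) ≤ J(1); that is, the optimal threshold policy achieves a total average cost no greater than that of the zero-wait policy, which updates in every slot (threshold Ω = 1). -/

import Mathlib

/-- the optimal threshold policy is no worse than the zero-wait
policy (threshold `Ω = 1`): `J(Ω*) ≤ J(1)` with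
`Ω* = (√(p_z + 2ω·C_u·(1−p_z)) − p_z)/(1−p_z)`. -/
theorem threshold_beats_zero_wait (p_z ω C_u : ℝ)
    (hpz0 : 0 < p_z) (hpz1 : p_z < 1) (hω : 0 ≤ ω) (hCu : 0 ≤ C_u)
    (J : ℝ → ℝ)
    (hJ : ∀ Ω : ℝ, J Ω = (1 - p_z) / (Ω * (1 - p_z) + p_z) *
      ((Ω ^ 2 - Ω) / 2 + (Ω + ω * C_u) / (1 - p_z) + p_z / (1 - p_z) ^ 2))
    (Ωstar : ℝ)
    (hΩstar : Ωstar = (Real.sqrt (p_z + 2 * ω * C_u * (1 - p_z)) - p_z) / (1 - p_z)) :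
    J Ωstar ≤ J 1 := by
  have hq : (0:ℝ) < 1 - p_z := by linarith
  set S := Real.sqrt (p_z + 2 * ω * C_u * (1 - p_z)) with hS
  have harg : 0 < p_z + 2 * ω * C_u * (1 - p_z) := by positivity
  have hSpos : 0 < S := Real.sqrt_pos.mpr harg
  have hS2 : S ^ 2 = p_z + 2 * ω * C_u * (1 - p_z) := Real.sq_sqrt harg.le
  have hden : (S - p_z) / (1 - p_z) * (1 - p_z) + p_z = S := by
    field_simp
    ring
  rw [hJ, hJ, hΩstar, hden]
  have h1 : (1:ℝ) * (1 - p_z) + p_z = 1 := by ring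
  rw [h1]
  have hωC : ω * C_u = (S ^ 2 - p_z) / (2 * (1 - p_z)) := by
    rw [eq_div_iff (by positivity)]; linarith
  rw [hωC]
  have e1 : (1 - p_z) / S *
      ((((S - p_z) / (1 - p_z)) ^ 2 - (S - p_z) / (1 - p_z)) / 2 +
        ((S - p_z) / (1 - p_z) + (S ^ 2 - p_z) / (2 * (1 - p_z))) / (1 - p_z) +
        p_z / (1 - p_z) ^ 2) = S / (1 - p_z) + 1 / 2 := by
    field_simp
    ring
  have e2 : (1 - p_z) / 1 *
      (((1:ℝ) ^ 2 - 1) / 2 + (1 + (S ^ 2 - p_z) / (2 * (1 - p_z))) / (1 - p_z) +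
        p_z / (1 - p_z) ^ 2) = (2 * (1 - p_z) + S ^ 2 + p_z) / (2 * (1 - p_z)) := by
    field_simp
    ring
  rw [e1, e2]
  rw [div_add' _ _ _ (by positivity : (1 - p_z) ≠ 0), div_le_div_iff₀ (by positivity) (by positivity)]
  nlinarith [sq_nonneg (S - 1), hq.le, mul_nonneg (sq_nonneg (S - 1)) hq.le]
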